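/- arXiv:2211.11088 — 2 statements merged into one kernel-verified Lean document; each statement's English description precedes it below -/
import Mathlib

section
/- (Proposition 2, linear tail) For every time t ∈ {0,…,T−1}, if y ≥ (T−t)·v̄ then for every ε > 0 the value function satisfies V_t(y + ε, r, π_t) = V_t(y, r, π_t) − γ·ε; that is, V_t(·, r, π_t) is affine with slope −γ on [(T−t)·v̄, ∞). -/
open MeasureTheory Set

/-- NEM X payment for net consumption `z` with buy price `pp` and sell price `pm`. -/
noncomputable def NEMPayment (pp pm z : ℝ) : ℝ := pp * max z 0 - pm * max (-z) 0

/-- The superdifferential of a function `f : ℝ → ℝ` (viewed as a concave function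
on `[0, ∞)`) at a point `y`. -/
def superdiff (f : ℝ → ℝ) (y : ℝ) : Set ℝ :=
  {s | ∀ z, 0 ≤ z → f z ≤ f y + s * (z - y)}

/-- Data of the EV-charging / flexible-consumption dynamic program over horizon
`{0, …, T-1}` with `K` flexible loads, under NEM time-of-use prices. -/
structure EVModel (K T : ℕ) (Ω : Type) [MeasurableSpace Ω] where
  /-- underlying probability measure -/
  μ : Measure Ω
  prob : IsProbabilityMeasure μ
  /-- consumption upper bounds -/
  dbar : Fin K → ℝ
  dbar_pos : ∀ i, 0 < dbar i
  /-- device utility functions -/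
  U : Fin K → ℝ → ℝ
  U_strictConcave : ∀ i, StrictConcaveOn ℝ (Icc 0 (dbar i)) (U i)
  U_strictMono : ∀ i, StrictMonoOn (U i) (Icc 0 (dbar i))
  U_diff : ∀ i, ∀ x ∈ Icc 0 (dbar i), DifferentiableWithinAt ℝ (U i) (Icc 0 (dbar i)) x
  U_contDeriv : ∀ i, ContinuousOn (fun x => derivWithin (U i) (Icc 0 (dbar i)) x) (Icc 0 (dbar i))
  U_zero : ∀ i, U i 0 = 0
  /-- renewable processes -/
  r : ℕ → Ω → ℝ
  r_meas : ∀ t, Measurable (r t)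
  r_nonneg : ∀ t ω, 0 ≤ r t ω
  r_int : ∀ t, Integrable (r t) μ
  r_indep : ProbabilityTheory.iIndepFun r μ
  /-- time-of-use buy prices `π_t⁺` -/
  pip : ℕ → ℝ
  /-- time-of-use sell prices `π_t⁻` -/
  pim : ℕ → ℝ
  /-- maximal per-period EV charge -/
  vbar : ℝ
  vbar_pos : 0 < vbar
  /-- per-unit penalty for unmet EV demand at the horizon -/
  γ : ℝ
  /-- `π_off⁻ = min_t π_t⁻` -/
  pioff : ℝ
  pioff_le : ∀ t < T, pioff ≤ pim t
  pioff_attained : ∃ t < T, pioff = pim t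
  /-- assumption A1 -/
  A1 : ∀ t < T, 0 < pim t ∧ pim t ≤ pip t ∧ pip t < γ

namespace EVModel

variable {K T : ℕ} {Ω : Type} [MeasurableSpace Ω]

/-- Stage reward `g_t(x_t, v, d)`. -/
noncomputable def stage (M : EVModel K T Ω) (t : ℕ) (rt v : ℝ) (d : Fin K → ℝ) : ℝ :=
  ∑ i, M.U i (d i) - NEMPayment (M.pip t) (M.pim t) (v + ∑ i, d i - rt)

/-- Feasible decisions `(v, d)` given remaining demand `y`. -/
def feas (M : EVModel K T Ω) (y : ℝ) : Set (ℝ × (Fin K → ℝ)) :=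
  {p | p.1 ∈ Icc 0 (min M.vbar y) ∧ ∀ i, p.2 i ∈ Icc 0 (M.dbar i)}

/-- Value function indexed by `k = T - 1 - t`, the number of remaining periods after
the current one. -/
noncomputable def W (M : EVModel K T Ω) : ℕ → ℝ → ℝ → ℝ
  | 0 => fun y rt => sSup ((fun p : ℝ × (Fin K → ℝ) =>
      M.stage (T - 1) rt p.1 p.2 - M.γ * (y - p.1)) '' M.feas y)
  | (k + 1) => fun y rt => sSup ((fun p : ℝ × (Fin K → ℝ) =>
      M.stage (T - 2 - k) rt p.1 p.2 +
        ∫ ω, M.W k (y - p.1) (M.r (T - 1 - k) ω) ∂M.μ) '' M.feas y)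

/-- Value function `V_t(y, r_t)` (the price argument is determined by `t`). -/
noncomputable def V (M : EVModel K T Ω) (t : ℕ) (y rt : ℝ) : ℝ := M.W (T - 1 - t) y rt

/-- Expected value function `V̄_t(y) = E[V_t(y, r_t, π_t)]`. -/
noncomputable def Vbar (M : EVModel K T Ω) (t : ℕ) (y : ℝ) : ℝ := ∫ ω, M.V t y (M.r t ω) ∂M.μ

/-- Objective of the Bellman equation at time `t` in state `(y, rt)`. -/
noncomputable def bellObj (M : EVModel K T Ω) (t : ℕ) (y rt : ℝ) (p : ℝ × (Fin K → ℝ)) : ℝ :=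
  if t = T - 1 then M.stage t rt p.1 p.2 - M.γ * (y - p.1)
  else M.stage t rt p.1 p.2 + ∫ ω, M.V (t + 1) (y - p.1) (M.r (t + 1) ω) ∂M.μ

/-- `(v, d)` is an optimal solution of the Bellman equation at time `t`. -/
def IsBellmanOpt (M : EVModel K T Ω) (t : ℕ) (y rt : ℝ) (p : ℝ × (Fin K → ℝ)) : Prop :=
  p ∈ M.feas y ∧ ∀ q ∈ M.feas y, M.bellObj t y rt q ≤ M.bellObj t y rt p

/-- Superdifferential `h_t` of the concave expected value function `V̄_t`. -/
noncomputable def h (M : EVModel K T Ω) (t : ℕ) (y : ℝ) : Set ℝ := superdiff (M.Vbar t) y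

end EVModel

section Aux

open Set

private lemma sSup_sub_const' {A : Set ℝ} (hA : A.Nonempty) (hb : BddAbove A) (d : ℝ) :
    sSup ((fun x => x - d) '' A) = sSup A - d := by
  have hb' : BddAbove ((fun x => x - d) '' A) := by
    obtain ⟨b, hbb⟩ := hb
    exact ⟨b - d, by rintro x ⟨a, ha, rfl⟩; exact sub_le_sub_right (hbb ha) d⟩
  apply le_antisymm
  · refine csSup_le (hA.image _) ?_
    rintro x ⟨a, ha, rfl⟩
    exact sub_le_sub_right (le_csSup hb ha) d
  · rw [sub_le_iff_le_add]
    refine csSup_le hA fun a ha => ?_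
    have := le_csSup hb' (Set.mem_image_of_mem _ ha)
    linarith

private lemma nem_abs_sub_le {pp pm z z' : ℝ} (hpp : 0 ≤ pp) (hpm : 0 ≤ pm) :
    |NEMPayment pp pm z - NEMPayment pp pm z'| ≤ (pp + pm) * |z - z'| := by
  have h1 : |max z 0 - max z' 0| ≤ |z - z'| := abs_max_sub_max_le_abs z z' 0
  have h2 : |max (-z) 0 - max (-z') 0| ≤ |z - z'| := by
    have := abs_max_sub_max_le_abs (-z) (-z') 0
    rwa [show -z - -z' = -(z - z') by ring, abs_neg] at this
  have heq : NEMPayment pp pm z - NEMPayment pp pm z'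
      = pp * (max z 0 - max z' 0) - pm * (max (-z) 0 - max (-z') 0) := by
    simp only [NEMPayment]; ring
  rw [heq]
  calc |pp * (max z 0 - max z' 0) - pm * (max (-z) 0 - max (-z') 0)|
      ≤ |pp * (max z 0 - max z' 0)| + |pm * (max (-z) 0 - max (-z') 0)| := abs_sub _ _
    _ ≤ pp * |z - z'| + pm * |z - z'| := by
        rw [abs_mul, abs_mul, abs_of_nonneg hpp, abs_of_nonneg hpm]
        exact add_le_add (mul_le_mul_of_nonneg_left h1 hpp) (mul_le_mul_of_nonneg_left h2 hpm)
    _ = (pp + pm) * |z - z'| := by ring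

end Aux

namespace EVModel

open Set MeasureTheory

variable {K T : ℕ} {Ω : Type} [MeasurableSpace Ω] (M : EVModel K T Ω)

private lemma gamma_pos (hT : 0 < T) : 0 < M.γ := by
  obtain ⟨h1, h2, h3⟩ := M.A1 0 hT; linarith

private lemma feas_eq {c c' : ℝ} (hc : M.vbar ≤ c) (hc' : M.vbar ≤ c') :
    M.feas c = M.feas c' := by
  unfold feas; rw [min_eq_left hc, min_eq_left hc']

private lemma zero_mem_feas {c : ℝ} (hc : 0 ≤ c) :
    ((0 : ℝ), (fun _ => (0:ℝ) : Fin K → ℝ)) ∈ M.feas c :=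
  ⟨⟨le_refl 0, le_min M.vbar_pos.le hc⟩, fun i => ⟨le_refl 0, (M.dbar_pos i).le⟩⟩

private lemma stage_le {s : ℕ} (hs : s < T) (rt : ℝ) {v : ℝ} {d : Fin K → ℝ} (hv : 0 ≤ v)
    (hd : ∀ i, d i ∈ Icc 0 (M.dbar i)) :
    M.stage s rt v d ≤ (∑ i, M.U i (M.dbar i)) + M.pim s * max rt 0 := by
  obtain ⟨h1, h2, h3⟩ := M.A1 s hs
  have hsum : ∑ i, M.U i (d i) ≤ ∑ i, M.U i (M.dbar i) := by
    refine Finset.sum_le_sum fun i _ => ?_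
    rcases hd i with ⟨hd0, hd1⟩
    rcases eq_or_lt_of_le hd1 with h | h
    · rw [h]
    · exact ((M.U_strictMono i) ⟨hd0, hd1⟩ ⟨(M.dbar_pos i).le, le_refl _⟩ h).le
  have hdsum : 0 ≤ ∑ i, d i := Finset.sum_nonneg fun i _ => (hd i).1
  have hz : -(v + ∑ i, d i - rt) ≤ max rt 0 := le_trans (by linarith) (le_max_left _ _)
  have a1 : 0 ≤ M.pip s * max (v + ∑ i, d i - rt) 0 :=
    mul_nonneg (by linarith) (le_max_right _ _)
  have a2 : M.pim s * max (-(v + ∑ i, d i - rt)) 0 ≤ M.pim s * max rt 0 :=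
    mul_le_mul_of_nonneg_left (max_le hz (le_max_right _ _)) (by linarith)
  simp only [stage, NEMPayment]
  linarith

private lemma stage_zero {s : ℕ} {rt : ℝ} (hrt : 0 ≤ rt) :
    M.stage s rt 0 (fun _ => 0) = M.pim s * rt := by
  simp only [stage, NEMPayment, M.U_zero, Finset.sum_const_zero]
  have h1 : (0:ℝ) + 0 - rt = -rt := by ring
  rw [h1, neg_neg, max_eq_right (neg_nonpos.mpr hrt), max_eq_left hrt]
  ring

private lemma rep_bdd {s : ℕ} (hs : s < T) (c rt κ : ℝ) (hγ : 0 ≤ M.γ) :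
    BddAbove ((fun p : ℝ × (Fin K → ℝ) =>
      M.stage s rt p.1 p.2 + (κ - M.γ * c + M.γ * p.1)) '' M.feas c) := by
  refine ⟨(∑ i, M.U i (M.dbar i)) + M.pim s * max rt 0 + (κ - M.γ * c + M.γ * M.vbar), ?_⟩
  rintro x ⟨p, hp, rfl⟩
  have h1 := M.stage_le hs rt hp.1.1 hp.2
  have h2 : p.1 ≤ M.vbar := le_trans hp.1.2 (min_le_left _ _)
  have h3 := mul_le_mul_of_nonneg_left h2 hγ
  dsimp only
  linarith

private lemma shift_of_rep {k : ℕ} {κ : ℝ} (hT : 0 < T)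
    (hκ : ∀ c, ((k : ℝ) + 1) * M.vbar ≤ c → ∀ rt,
      M.W k c rt = sSup ((fun p : ℝ × (Fin K → ℝ) =>
        M.stage (T - 1 - k) rt p.1 p.2 + (κ - M.γ * c + M.γ * p.1)) '' M.feas c))
    {c c' : ℝ} (hc : ((k : ℝ) + 1) * M.vbar ≤ c) (hc' : ((k : ℝ) + 1) * M.vbar ≤ c')
    (rt : ℝ) : M.W k c' rt = M.W k c rt - M.γ * (c' - c) := by
  have hs : T - 1 - k < T := by omega
  have hγ : 0 ≤ M.γ := (M.gamma_pos hT).le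
  have hvb : M.vbar ≤ ((k : ℝ) + 1) * M.vbar := by
    nlinarith [M.vbar_pos, Nat.cast_nonneg (α := ℝ) k]
  have hc0 : (0:ℝ) ≤ c := le_trans (le_trans M.vbar_pos.le hvb) hc
  rw [hκ c hc rt, hκ c' hc' rt, M.feas_eq (le_trans hvb hc') (le_trans hvb hc)]
  have himg : (fun p : ℝ × (Fin K → ℝ) =>
        M.stage (T - 1 - k) rt p.1 p.2 + (κ - M.γ * c' + M.γ * p.1)) '' M.feas c
      = (fun x => x - M.γ * (c' - c)) '' ((fun p : ℝ × (Fin K → ℝ) =>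
        M.stage (T - 1 - k) rt p.1 p.2 + (κ - M.γ * c + M.γ * p.1)) '' M.feas c) := by
    rw [Set.image_image]
    exact Set.image_congr fun p _ => by ring
  rw [himg, sSup_sub_const' (Set.Nonempty.image _ ⟨_, M.zero_mem_feas hc0⟩)
    (M.rep_bdd hs c rt κ hγ)]

private lemma rep (hT : 0 < T) (k : ℕ) : ∃ κ : ℝ, ∀ c, ((k : ℝ) + 1) * M.vbar ≤ c → ∀ rt,
    M.W k c rt = sSup ((fun p : ℝ × (Fin K → ℝ) =>
      M.stage (T - 1 - k) rt p.1 p.2 + (κ - M.γ * c + M.γ * p.1)) '' M.feas c) := by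
  induction k with
  | zero =>
    refine ⟨0, fun c hc rt => ?_⟩
    simp only [W, Nat.sub_zero, Nat.cast_zero]
    congr 1
    exact Set.image_congr fun p _ => by ring
  | succ k ih =>
    obtain ⟨κ, hκ⟩ := ih
    haveI := M.prob
    have hs : T - 1 - k < T := by omega
    obtain ⟨hpm0, hpmp, hppγ⟩ := M.A1 (T - 1 - k) hs
    have hγ : 0 ≤ M.γ := (M.gamma_pos hT).le
    set c₀ : ℝ := ((k : ℝ) + 1) * M.vbar with hc₀def
    have hvb : M.vbar ≤ c₀ := by
      nlinarith [M.vbar_pos, Nat.cast_nonneg (α := ℝ) k]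
    have hc₀0 : (0:ℝ) ≤ c₀ := le_trans M.vbar_pos.le hvb
    set f : ℝ → ℝ := fun rt => M.W k c₀ rt with hfdef
    have hne : ∀ rt : ℝ, ((fun p : ℝ × (Fin K → ℝ) =>
        M.stage (T - 1 - k) rt p.1 p.2 + (κ - M.γ * c₀ + M.γ * p.1)) '' M.feas c₀).Nonempty :=
      fun rt => Set.Nonempty.image _ ⟨_, M.zero_mem_feas hc₀0⟩
    -- upper bound on f
    have hfub : ∀ rt : ℝ, f rt ≤ (∑ i, M.U i (M.dbar i)) + M.pim (T - 1 - k) * max rt 0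
        + (κ - M.γ * c₀ + M.γ * M.vbar) := by
      intro rt
      rw [hfdef]
      dsimp only
      rw [hκ c₀ le_rfl rt]
      refine csSup_le (hne rt) ?_
      rintro x ⟨p, hp, rfl⟩
      have h1 := M.stage_le hs rt hp.1.1 hp.2
      have h2 : p.1 ≤ M.vbar := le_trans hp.1.2 (min_le_left _ _)
      have h3 := mul_le_mul_of_nonneg_left h2 hγ
      dsimp only
      linarith
    -- lower bound on f
    have hflb : ∀ rt : ℝ, 0 ≤ rt → M.pim (T - 1 - k) * rt + (κ - M.γ * c₀) ≤ f rt := by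
      intro rt hrt
      rw [hfdef]
      dsimp only
      rw [hκ c₀ le_rfl rt]
      refine le_csSup (M.rep_bdd hs c₀ rt κ hγ) ⟨_, M.zero_mem_feas hc₀0, ?_⟩
      dsimp only
      rw [M.stage_zero hrt]
      ring
    -- Lipschitz continuity of f
    have hlip : ∀ a b : ℝ, f a ≤ f b + (M.pip (T - 1 - k) + M.pim (T - 1 - k)) * dist a b := by
      intro a b
      rw [hfdef]
      dsimp only
      rw [hκ c₀ le_rfl a, hκ c₀ le_rfl b]
      refine csSup_le (hne a) ?_
      rintro x ⟨p, hp, rfl⟩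
      have hmem : M.stage (T - 1 - k) b p.1 p.2 + (κ - M.γ * c₀ + M.γ * p.1)
          ≤ sSup ((fun p : ℝ × (Fin K → ℝ) =>
            M.stage (T - 1 - k) b p.1 p.2 + (κ - M.γ * c₀ + M.γ * p.1)) '' M.feas c₀) :=
        le_csSup (M.rep_bdd hs c₀ b κ hγ) ⟨p, hp, rfl⟩
      have hst : M.stage (T - 1 - k) a p.1 p.2 ≤ M.stage (T - 1 - k) b p.1 p.2
          + (M.pip (T - 1 - k) + M.pim (T - 1 - k)) * dist a b := by
        have hd := nem_abs_sub_le (z := p.1 + ∑ i, p.2 i - b) (z' := p.1 + ∑ i, p.2 i - a)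
          (by linarith : (0:ℝ) ≤ M.pip (T - 1 - k)) hpm0.le
        rw [show p.1 + ∑ i, p.2 i - b - (p.1 + ∑ i, p.2 i - a) = a - b by ring] at hd
        have habs := le_of_abs_le hd
        rw [Real.dist_eq]
        simp only [stage]
        linarith [le_abs_self (a - b), abs_nonneg (a - b),
          neg_abs_le (NEMPayment (M.pip (T-1-k)) (M.pim (T-1-k)) (p.1 + ∑ i, p.2 i - b)
            - NEMPayment (M.pip (T-1-k)) (M.pim (T-1-k)) (p.1 + ∑ i, p.2 i - a))]
      dsimp only
      linarith
    have hcont : Continuous f :=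
      (LipschitzWith.of_le_add_mul' _ hlip).continuous
    -- integrability
    have hint : Integrable (fun ω => f (M.r (T - 1 - k) ω)) M.μ := by
      set C : ℝ := max ((∑ i, M.U i (M.dbar i)) + (κ - M.γ * c₀ + M.γ * M.vbar))
        (-(κ - M.γ * c₀)) with hCdef
      have hb : ∀ ω, ‖f (M.r (T - 1 - k) ω)‖
          ≤ ‖C + M.pim (T - 1 - k) * M.r (T - 1 - k) ω‖ := by
        intro ω
        set rr := M.r (T - 1 - k) ω with hrr
        have hrt := M.r_nonneg (T - 1 - k) ω
        rw [← hrr] at hrt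
        have h1 := hfub rr
        rw [max_eq_left hrt] at h1
        have h2 := hflb rr hrt
        have h3 : 0 ≤ M.pim (T - 1 - k) * rr := mul_nonneg hpm0.le hrt
        have h4 : (∑ i, M.U i (M.dbar i)) + (κ - M.γ * c₀ + M.γ * M.vbar) ≤ C :=
          le_max_left _ _
        have h5 : -(κ - M.γ * c₀) ≤ C := le_max_right _ _
        rw [Real.norm_eq_abs, Real.norm_eq_abs]
        have habs : |f rr| ≤ C + M.pim (T - 1 - k) * rr :=
          abs_le.mpr ⟨by linarith, by linarith⟩
        exact le_trans habs (le_abs_self _)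
      exact Integrable.mono ((integrable_const C).add ((M.r_int _).const_mul _))
        ((hcont.measurable.comp (M.r_meas _)).aestronglyMeasurable) (ae_of_all _ hb)
    -- conclude
    refine ⟨(∫ ω, f (M.r (T - 1 - k) ω) ∂M.μ) + M.γ * c₀, fun c hc rt => ?_⟩
    have hcast : ((k + 1 : ℕ) : ℝ) + 1 = ((k : ℝ) + 1) + 1 := by push_cast; ring
    rw [hcast] at hc
    have hidx : T - 1 - (k + 1) = T - 2 - k := by omega
    simp only [W]
    rw [hidx]
    congr 1
    refine Set.image_congr fun p hp => ?_
    have hp1 : p.1 ≤ M.vbar := le_trans hp.1.2 (min_le_left _ _)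
    have hp0 : 0 ≤ p.1 := hp.1.1
    have h1 : c₀ ≤ c - p.1 := by rw [hc₀def]; linarith
    have h2 : (fun ω => M.W k (c - p.1) (M.r (T - 1 - k) ω))
        = fun ω => f (M.r (T - 1 - k) ω) - M.γ * ((c - p.1) - c₀) :=
      funext fun ω => M.shift_of_rep hT hκ le_rfl h1 _
    rw [h2, integral_sub hint (integrable_const _), integral_const]
    simp only [measure_univ, probReal_univ, one_smul, smul_eq_mul, one_mul]
    ring

end EVModel

/-- **Proposition 2 (linear tail).**
For every `t ∈ {0, …, T-1}`, if `y ≥ (T - t) v̄` then for every `ε > 0`,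
`V_t(y + ε, r, π_t) = V_t(y, r, π_t) - γ ε`; i.e. `V_t(·, r, π_t)` is affine with
slope `-γ` on `[(T - t) v̄, ∞)`. -/
theorem prop2_linear_tail (K T : ℕ) (Ω : Type) [MeasurableSpace Ω]
    (M : EVModel K T Ω) (t : ℕ) (ht : t < T) (rt : ℝ) (hrt : 0 ≤ rt)
    (y : ℝ) (hy : ((T - t : ℕ) : ℝ) * M.vbar ≤ y) :
    ∀ ε : ℝ, 0 < ε → M.V t (y + ε) rt = M.V t y rt - M.γ * ε := by
  intro ε hε
  have hT : 0 < T := lt_of_le_of_lt (Nat.zero_le t) ht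
  obtain ⟨κ, hκ⟩ := M.rep hT (T - 1 - t)
  have hcast : ((T - t : ℕ) : ℝ) = ((T - 1 - t : ℕ) : ℝ) + 1 := by
    have h : T - t = (T - 1 - t) + 1 := by omega
    rw [h]; push_cast; ring
  rw [hcast] at hy
  have h2 : (((T - 1 - t : ℕ) : ℝ) + 1) * M.vbar ≤ y + ε := le_trans hy (by nlinarith [M.vbar_pos])
  have hsh := M.shift_of_rep hT hκ hy h2 rt
  show M.W (T - 1 - t) (y + ε) rt = M.W (T - 1 - t) y rt - M.γ * ε
  rw [hsh]; ring
end

section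
/- (Existence of charging thresholds) For every time t < T−1 there exist thresholds τ_t and δ_t in [0, (T−t−1)·v̄] with δ_t ≤ τ_t such that −π_t⁺ ∈ h_{t+1}(τ_t) and −π_t⁻ ∈ h_{t+1}(δ_t), where h_{t+1}(y) is the superdifferential of the concave expected value function V̄_{t+1}(y) := E[V_{t+1}(y, r_{t+1}, π_{t+1})] at y. -/
open MeasureTheory Set

section AuxHelpers

variable {α : Type*}

private lemma abs_sub_le'' (a b : ℝ) : |a - b| ≤ |a| + |b| := by
  calc |a - b| = |a + -b| := by rw [sub_eq_add_neg]
  _ ≤ |a| + |-b| := abs_add_le _ _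
  _ = |a| + |b| := by rw [abs_neg]

private lemma sSup_image_le_sSup_image {P Q : Set α} (hne : P.Nonempty)
    {g g' : α → ℝ} {c : ℝ} (hb : BddAbove (g' '' Q))
    (h : ∀ p ∈ P, ∃ q ∈ Q, g p ≤ g' q + c) :
    sSup (g '' P) ≤ sSup (g' '' Q) + c := by
  refine csSup_le (hne.image _) ?_
  rintro _ ⟨p, hp, rfl⟩
  obtain ⟨q, hq, hle⟩ := h p hp
  exact hle.trans (by linarith [le_csSup hb ⟨q, hq, rfl⟩])

private lemma sSup_image_add_const {P : Set α} (hne : P.Nonempty) {g : α → ℝ}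
    (hb : BddAbove (g '' P)) (c : ℝ) :
    sSup ((fun p => g p + c) '' P) = sSup (g '' P) + c := by
  have hb' : BddAbove ((fun p => g p + c) '' P) := by
    obtain ⟨u, hu⟩ := hb
    refine ⟨u + c, ?_⟩
    rintro _ ⟨p, hp, rfl⟩
    show g p + c ≤ u + c; linarith [hu ⟨p, hp, rfl⟩]
  apply le_antisymm
  · exact sSup_image_le_sSup_image hne hb fun p hp => ⟨p, hp, le_rfl⟩
  · have h2 : sSup (g '' P) ≤ sSup ((fun p => g p + c) '' P) + -c :=
      sSup_image_le_sSup_image hne hb' (fun p hp => ⟨p, hp, by simp⟩)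
    linarith

private lemma max_zero_le_abs (z : ℝ) : max z 0 ≤ |z| := max_le (le_abs_self z) (abs_nonneg z)

private lemma abs_NEM_le (pp pm z : ℝ) : |NEMPayment pp pm z| ≤ (|pp| + |pm|) * |z| := by
  unfold NEMPayment
  have h1 : |max z 0| ≤ |z| := by
    rw [abs_of_nonneg (le_max_right z 0)]; exact max_zero_le_abs z
  have h2 : |max (-z) 0| ≤ |z| := by
    rw [abs_of_nonneg (le_max_right (-z) 0)]
    simpa [abs_neg] using max_zero_le_abs (-z)
  calc |pp * max z 0 - pm * max (-z) 0| ≤ |pp * max z 0| + |pm * max (-z) 0| :=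
        abs_sub_le'' _ _
    _ = |pp| * |max z 0| + |pm| * |max (-z) 0| := by rw [abs_mul, abs_mul]
    _ ≤ |pp| * |z| + |pm| * |z| := by
        have := abs_nonneg pp; have := abs_nonneg pm; nlinarith [abs_nonneg z]
    _ = (|pp| + |pm|) * |z| := by ring

private lemma NEM_lip (pp pm z z' : ℝ) :
    |NEMPayment pp pm z - NEMPayment pp pm z'| ≤ (|pp| + |pm|) * |z - z'| := by
  unfold NEMPayment
  have e : pp * max z 0 - pm * max (-z) 0 - (pp * max z' 0 - pm * max (-z') 0)
      = pp * (max z 0 - max z' 0) - pm * (max (-z) 0 - max (-z') 0) := by ring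
  rw [e]
  have h1 : |max z 0 - max z' 0| ≤ |z - z'| := abs_max_sub_max_le_abs z z' 0
  have h2 : |max (-z) 0 - max (-z') 0| ≤ |z - z'| := by
    have := abs_max_sub_max_le_abs (-z) (-z') 0
    calc |max (-z) 0 - max (-z') 0| ≤ |-z - -z'| := this
      _ = |z - z'| := by rw [show -z - -z' = -(z - z') by ring, abs_neg]
  calc |pp * (max z 0 - max z' 0) - pm * (max (-z) 0 - max (-z') 0)|
      ≤ |pp * (max z 0 - max z' 0)| + |pm * (max (-z) 0 - max (-z') 0)| := abs_sub_le'' _ _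
    _ = |pp| * |max z 0 - max z' 0| + |pm| * |max (-z) 0 - max (-z') 0| := by
        rw [abs_mul, abs_mul]
    _ ≤ |pp| * |z - z'| + |pm| * |z - z'| := by
        have := abs_nonneg pp; have := abs_nonneg pm; nlinarith [abs_nonneg (z - z')]
    _ = (|pp| + |pm|) * |z - z'| := by ring

end AuxHelpers
namespace EVModel

variable {K T : ℕ} {Ω : Type} [MeasurableSpace Ω]

/-- Sum of maximal utilities. -/
noncomputable def SU (M : EVModel K T Ω) : ℝ := ∑ i, M.U i (M.dbar i)

/-- Sum of consumption upper bounds. -/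
noncomputable def DD (M : EVModel K T Ω) : ℝ := ∑ i, M.dbar i

/-- Price magnitude at time `s`. -/
noncomputable def Lp (M : EVModel K T Ω) (s : ℕ) : ℝ := |M.pip s| + |M.pim s|

lemma Lp_nonneg (M : EVModel K T Ω) (s : ℕ) : 0 ≤ M.Lp s :=
  add_nonneg (abs_nonneg _) (abs_nonneg _)

lemma DD_nonneg (M : EVModel K T Ω) : 0 ≤ M.DD :=
  Finset.sum_nonneg fun i _ => (M.dbar_pos i).le

lemma U_nonneg (M : EVModel K T Ω) (i : Fin K) {x : ℝ} (hx : x ∈ Icc 0 (M.dbar i)) :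
    0 ≤ M.U i x := by
  have h0 : (0:ℝ) ∈ Icc 0 (M.dbar i) := ⟨le_rfl, (M.dbar_pos i).le⟩
  have := (M.U_strictMono i).monotoneOn h0 hx hx.1
  rw [M.U_zero i] at this; exact this

lemma U_le_U_dbar (M : EVModel K T Ω) (i : Fin K) {x : ℝ} (hx : x ∈ Icc 0 (M.dbar i)) :
    M.U i x ≤ M.U i (M.dbar i) :=
  (M.U_strictMono i).monotoneOn hx ⟨(M.dbar_pos i).le, le_rfl⟩ hx.2

lemma SU_nonneg (M : EVModel K T Ω) : 0 ≤ M.SU :=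
  Finset.sum_nonneg fun i _ => M.U_nonneg i ⟨(M.dbar_pos i).le, le_rfl⟩

lemma sum_U_nonneg (M : EVModel K T Ω) {d : Fin K → ℝ} (hd : ∀ i, d i ∈ Icc 0 (M.dbar i)) :
    0 ≤ ∑ i, M.U i (d i) :=
  Finset.sum_nonneg fun i _ => M.U_nonneg i (hd i)

lemma sum_U_le (M : EVModel K T Ω) {d : Fin K → ℝ} (hd : ∀ i, d i ∈ Icc 0 (M.dbar i)) :
    ∑ i, M.U i (d i) ≤ M.SU :=
  Finset.sum_le_sum fun i _ => M.U_le_U_dbar i (hd i)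

lemma sum_d_mem (M : EVModel K T Ω) {d : Fin K → ℝ} (hd : ∀ i, d i ∈ Icc 0 (M.dbar i)) :
    0 ≤ ∑ i, d i ∧ ∑ i, d i ≤ M.DD :=
  ⟨Finset.sum_nonneg fun i _ => (hd i).1, Finset.sum_le_sum fun i _ => (hd i).2⟩

-- feasibility facts
lemma zero_mem_feas_s10 (M : EVModel K T Ω) {y : ℝ} (hy : 0 ≤ y) :
    ((0 : ℝ), (fun _ => 0 : Fin K → ℝ)) ∈ M.feas y := by
  refine ⟨⟨le_rfl, le_min M.vbar_pos.le hy⟩, fun i => ⟨le_rfl, (M.dbar_pos i).le⟩⟩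

lemma feas_nonempty (M : EVModel K T Ω) {y : ℝ} (hy : 0 ≤ y) : (M.feas y).Nonempty :=
  ⟨_, M.zero_mem_feas_s10 hy⟩

lemma feas_subset (M : EVModel K T Ω) {y y' : ℝ} (h : y' ≤ y) : M.feas y' ⊆ M.feas y := by
  rintro p ⟨⟨h1, h2⟩, h3⟩
  exact ⟨⟨h1, h2.trans (min_le_min le_rfl h)⟩, h3⟩

lemma feas_eq_of_vbar_le (M : EVModel K T Ω) {y y' : ℝ} (h : M.vbar ≤ y) (h' : M.vbar ≤ y') :
    M.feas y = M.feas y' := by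
  unfold feas; rw [min_eq_left h, min_eq_left h']

lemma feas_v_nonneg (M : EVModel K T Ω) {y : ℝ} {p : ℝ × (Fin K → ℝ)} (hp : p ∈ M.feas y) :
    0 ≤ p.1 := hp.1.1

lemma feas_v_le_vbar (M : EVModel K T Ω) {y : ℝ} {p : ℝ × (Fin K → ℝ)} (hp : p ∈ M.feas y) :
    p.1 ≤ M.vbar := hp.1.2.trans (min_le_left _ _)

lemma feas_v_le_y (M : EVModel K T Ω) {y : ℝ} {p : ℝ × (Fin K → ℝ)} (hp : p ∈ M.feas y) :
    p.1 ≤ y := hp.1.2.trans (min_le_right _ _)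

-- stage bounds
lemma stage_abs_le (M : EVModel K T Ω) (s : ℕ) (rt : ℝ) {y : ℝ} {p : ℝ × (Fin K → ℝ)}
    (hp : p ∈ M.feas y) :
    |M.stage s rt p.1 p.2| ≤ M.SU + M.Lp s * (M.vbar + M.DD + |rt|) := by
  obtain ⟨hS0, hS1⟩ := M.sum_d_mem hp.2
  have hU0 := M.sum_U_nonneg hp.2
  have hU1 := M.sum_U_le hp.2
  have hz : |p.1 + ∑ i, p.2 i - rt| ≤ M.vbar + M.DD + |rt| := by
    calc |p.1 + ∑ i, p.2 i - rt| ≤ |p.1 + ∑ i, p.2 i| + |rt| := abs_sub_le'' _ _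
      _ ≤ M.vbar + M.DD + |rt| := by
          have h1 : |p.1 + ∑ i, p.2 i| = p.1 + ∑ i, p.2 i :=
            abs_of_nonneg (add_nonneg (M.feas_v_nonneg hp) hS0)
          have := M.feas_v_le_vbar hp
          linarith
  have hN : |NEMPayment (M.pip s) (M.pim s) (p.1 + ∑ i, p.2 i - rt)| ≤
      M.Lp s * (M.vbar + M.DD + |rt|) := by
    refine (abs_NEM_le _ _ _).trans ?_
    exact mul_le_mul_of_nonneg_left hz (M.Lp_nonneg s)
  unfold stage
  rw [abs_le]
  constructor
  · have := neg_abs_le (NEMPayment (M.pip s) (M.pim s) (p.1 + ∑ i, p.2 i - rt))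
    have hSU := M.SU_nonneg
    nlinarith [le_abs_self (NEMPayment (M.pip s) (M.pim s) (p.1 + ∑ i, p.2 i - rt))]
  · have := le_abs_self (NEMPayment (M.pip s) (M.pim s) (p.1 + ∑ i, p.2 i - rt))
    nlinarith [neg_abs_le (NEMPayment (M.pip s) (M.pim s) (p.1 + ∑ i, p.2 i - rt))]

lemma stage_sub_rt (M : EVModel K T Ω) (s : ℕ) (rt rt' v : ℝ) (d : Fin K → ℝ) :
    |M.stage s rt v d - M.stage s rt' v d| ≤ M.Lp s * |rt - rt'| := by
  unfold stage
  have e : (∑ i, M.U i (d i)) - NEMPayment (M.pip s) (M.pim s) (v + ∑ i, d i - rt)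
      - ((∑ i, M.U i (d i)) - NEMPayment (M.pip s) (M.pim s) (v + ∑ i, d i - rt'))
      = NEMPayment (M.pip s) (M.pim s) (v + ∑ i, d i - rt')
        - NEMPayment (M.pip s) (M.pim s) (v + ∑ i, d i - rt) := by ring
  rw [e]
  have := NEM_lip (M.pip s) (M.pim s) (v + ∑ i, d i - rt') (v + ∑ i, d i - rt)
  calc _ ≤ (|M.pip s| + |M.pim s|) * |v + ∑ i, d i - rt' - (v + ∑ i, d i - rt)| := this
    _ = M.Lp s * |rt - rt'| := by
        rw [show v + ∑ i, d i - rt' - (v + ∑ i, d i - rt) = rt - rt' by ring]; rfl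

lemma stage_sub_v (M : EVModel K T Ω) (s : ℕ) (rt v v' : ℝ) (d : Fin K → ℝ) :
    |M.stage s rt v d - M.stage s rt v' d| ≤ M.Lp s * |v - v'| := by
  unfold stage
  have e : (∑ i, M.U i (d i)) - NEMPayment (M.pip s) (M.pim s) (v + ∑ i, d i - rt)
      - ((∑ i, M.U i (d i)) - NEMPayment (M.pip s) (M.pim s) (v' + ∑ i, d i - rt))
      = NEMPayment (M.pip s) (M.pim s) (v' + ∑ i, d i - rt)
        - NEMPayment (M.pip s) (M.pim s) (v + ∑ i, d i - rt) := by ring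
  rw [e]
  have := NEM_lip (M.pip s) (M.pim s) (v' + ∑ i, d i - rt) (v + ∑ i, d i - rt)
  calc _ ≤ (|M.pip s| + |M.pim s|) * |v' + ∑ i, d i - rt - (v + ∑ i, d i - rt)| := this
    _ = M.Lp s * |v - v'| := by
        rw [show v' + ∑ i, d i - rt - (v + ∑ i, d i - rt) = -(v - v') by ring, abs_neg]; rfl

end EVModel
namespace EVModel

variable {K T : ℕ} {Ω : Type} [MeasurableSpace Ω]

lemma G_master (M : EVModel K T Ω) (hγ : 0 ≤ M.γ) (s : ℕ) (F : ℝ → ℝ)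
    (A LF c0 : ℝ) (hA : 0 ≤ A) (hLF : 0 ≤ LF) (hc0 : 0 ≤ c0)
    (hFb : ∀ z, 0 ≤ z → |F z| ≤ A + M.γ * z)
    (hFlip : ∀ z z', 0 ≤ z' → z' ≤ z → |F z - F z'| ≤ LF * (z - z'))
    (hFlin : ∀ z z', c0 ≤ z' → z' ≤ z → F z = F z' - M.γ * (z - z'))
    (G : ℝ → ℝ → ℝ)
    (hG : ∀ y rt, G y rt =
      sSup ((fun p : ℝ × (Fin K → ℝ) => M.stage s rt p.1 p.2 + F (y - p.1)) '' M.feas y)) :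
    (∀ y rt, 0 ≤ y →
      |G y rt| ≤ (M.SU + M.Lp s * (M.vbar + M.DD) + A) + M.Lp s * |rt| + M.γ * y) ∧
    (∀ y rt rt', 0 ≤ y → |G y rt - G y rt'| ≤ M.Lp s * |rt - rt'|) ∧
    (∀ y y' rt, 0 ≤ y' → y' ≤ y → |G y rt - G y' rt| ≤ (M.Lp s + LF) * (y - y')) ∧
    (∀ y y' rt, c0 + M.vbar ≤ y' → y' ≤ y → G y rt = G y' rt - M.γ * (y - y')) := by
  set obj : ℝ → ℝ → ℝ × (Fin K → ℝ) → ℝ :=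
    fun y rt p => M.stage s rt p.1 p.2 + F (y - p.1) with hobj_def
  have hzsub : ∀ {y : ℝ} {p : ℝ × (Fin K → ℝ)}, p ∈ M.feas y → 0 ≤ y - p.1 := by
    intro y p hp; linarith [M.feas_v_le_y hp]
  have hobj : ∀ y rt (p : ℝ × (Fin K → ℝ)), 0 ≤ y → p ∈ M.feas y →
      |obj y rt p| ≤ (M.SU + M.Lp s * (M.vbar + M.DD) + A) + M.Lp s * |rt| + M.γ * y := by
    intro y rt p hy hp
    have h1 := M.stage_abs_le s rt hp
    have h2 := hFb (y - p.1) (hzsub hp)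
    have h3 : M.γ * (y - p.1) ≤ M.γ * y :=
      mul_le_mul_of_nonneg_left (by linarith [M.feas_v_nonneg hp]) hγ
    calc |obj y rt p| ≤ |M.stage s rt p.1 p.2| + |F (y - p.1)| := abs_add_le _ _
      _ ≤ _ := by
        rw [mul_add, mul_add] at h1
        have := abs_nonneg rt
        nlinarith [M.Lp_nonneg s]
  have hbdd : ∀ y rt, 0 ≤ y → BddAbove (obj y rt '' M.feas y) := by
    intro y rt hy
    refine ⟨(M.SU + M.Lp s * (M.vbar + M.DD) + A) + M.Lp s * |rt| + M.γ * y, ?_⟩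
    rintro _ ⟨p, hp, rfl⟩
    exact (le_abs_self _).trans (hobj y rt p hy hp)
  refine ⟨?_, ?_, ?_, ?_⟩
  · -- bound
    intro y rt hy
    rw [hG, abs_le]
    constructor
    · have hmem : obj y rt ((0 : ℝ), (fun _ => 0 : Fin K → ℝ)) ∈ obj y rt '' M.feas y :=
        ⟨_, M.zero_mem_feas_s10 hy, rfl⟩
      have h1 := le_csSup (hbdd y rt hy) hmem
      have h2 := hobj y rt _ hy (M.zero_mem_feas_s10 hy)
      have := neg_abs_le (obj y rt ((0 : ℝ), (fun _ => 0 : Fin K → ℝ)))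
      rw [abs_le] at h2
      linarith
    · refine csSup_le ((M.feas_nonempty hy).image _) ?_
      rintro _ ⟨p, hp, rfl⟩
      exact (le_abs_self _).trans (hobj y rt p hy hp)
  · -- Lipschitz in rt
    intro y rt rt' hy
    have key : ∀ u u' : ℝ, sSup (obj y u '' M.feas y) ≤
        sSup (obj y u' '' M.feas y) + M.Lp s * |u - u'| := by
      intro u u'
      refine sSup_image_le_sSup_image (M.feas_nonempty hy) (hbdd y u' hy) ?_
      intro p hp
      refine ⟨p, hp, ?_⟩
      have := M.stage_sub_rt s u u' p.1 p.2
      have h1 := (abs_le.mp this).2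
      simp only [hobj_def]
      linarith
    rw [hG, hG, abs_le]
    have k1 := key rt rt'
    have k2 := key rt' rt
    rw [abs_sub_comm rt' rt] at k2
    constructor <;> linarith
  · -- Lipschitz in y
    intro y y' rt hy' hle
    have hy : 0 ≤ y := hy'.trans hle
    have dir1 : sSup (obj y rt '' M.feas y) ≤
        sSup (obj y' rt '' M.feas y') + (M.Lp s + LF) * (y - y') := by
      refine sSup_image_le_sSup_image (M.feas_nonempty hy) (hbdd y' rt hy') ?_
      intro p hp
      set v' : ℝ := min p.1 y' with hv'
      have hq : ((v', p.2) : ℝ × (Fin K → ℝ)) ∈ M.feas y' := by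
        refine ⟨⟨le_min (M.feas_v_nonneg hp) hy', le_min ((min_le_left _ _).trans
          (M.feas_v_le_vbar hp)) (min_le_right _ _)⟩, hp.2⟩
      refine ⟨(v', p.2), hq, ?_⟩
      have hvv : 0 ≤ p.1 - v' ∧ p.1 - v' ≤ y - y' := by
        constructor
        · simp [hv', min_le_left]
        · rcases le_total p.1 y' with h | h
          · rw [hv', min_eq_left h]; linarith
          · rw [hv', min_eq_right h]; linarith [M.feas_v_le_y hp]
      have hst := (abs_le.mp (M.stage_sub_v s rt p.1 v' p.2)).2
      have habs : |p.1 - v'| = p.1 - v' := abs_of_nonneg hvv.1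
      rw [habs] at hst
      have hF : |F (y - p.1) - F (y' - v')| ≤ LF * ((y - p.1) - (y' - v')) := by
        refine hFlip _ _ ?_ ?_
        · have : v' ≤ y' := min_le_right _ _
          linarith
        · linarith [hvv.2]
      have hF2 := (abs_le.mp hF).2
      have hLps := M.Lp_nonneg s
      simp only [hobj_def]
      have hst2 : M.Lp s * (p.1 - v') ≤ M.Lp s * (y - y') :=
        mul_le_mul_of_nonneg_left hvv.2 hLps
      have hF3 : LF * ((y - p.1) - (y' - v')) ≤ LF * (y - y') := by
        apply mul_le_mul_of_nonneg_left _ hLF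
        linarith [hvv.1]
      nlinarith
    have dir2 : sSup (obj y' rt '' M.feas y') ≤
        sSup (obj y rt '' M.feas y) + (M.Lp s + LF) * (y - y') := by
      refine sSup_image_le_sSup_image (M.feas_nonempty hy') (hbdd y rt hy) ?_
      intro p hp
      refine ⟨p, M.feas_subset hle hp, ?_⟩
      have hF : |F (y' - p.1) - F (y - p.1)| ≤ LF * (y - y') := by
        rw [abs_sub_comm]
        have := hFlip (y - p.1) (y' - p.1) (hzsub hp) (by linarith)
        calc |F (y - p.1) - F (y' - p.1)| ≤ LF * ((y - p.1) - (y' - p.1)) := this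
          _ = LF * (y - y') := by ring_nf
      have hF2 := (abs_le.mp hF).2
      have hLps := M.Lp_nonneg s
      simp only [hobj_def]
      nlinarith [mul_nonneg hLps (sub_nonneg.mpr hle)]
    rw [hG, hG, abs_le]
    constructor <;> linarith
  · -- linear decay
    intro y y' rt hc hle
    have hvy' : M.vbar ≤ y' := by linarith
    have hvy : M.vbar ≤ y := hvy'.trans hle
    have hy' : 0 ≤ y' := M.vbar_pos.le.trans hvy'
    have hfeq : M.feas y = M.feas y' := M.feas_eq_of_vbar_le hvy hvy'
    have hptw : ∀ p : ℝ × (Fin K → ℝ), p ∈ M.feas y' →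
        obj y rt p = obj y' rt p + -(M.γ * (y - y')) := by
      intro p hp
      have h1 : c0 ≤ y' - p.1 := by linarith [M.feas_v_le_vbar hp]
      have h2 : y' - p.1 ≤ y - p.1 := by linarith
      have := hFlin (y - p.1) (y' - p.1) h1 h2
      simp only [hobj_def]
      rw [this]; ring
    rw [hG, hG, hfeq]
    have : obj y rt '' M.feas y' = (fun p => obj y' rt p + -(M.γ * (y - y'))) '' M.feas y' := by
      apply image_congr
      intro p hp
      exact hptw p hp
    rw [this, sSup_image_add_const (M.feas_nonempty hy') (hbdd y' rt hy')]
    ring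

end EVModel
namespace EVModel

variable {K T : ℕ} {Ω : Type} [MeasurableSpace Ω]

lemma W_master (M : EVModel K T Ω) (hγ : 0 ≤ M.γ) (k : ℕ) :
    ∃ a b L : ℝ, 0 ≤ a ∧ 0 ≤ b ∧ 0 ≤ L ∧
      (∀ y rt, 0 ≤ y → |M.W k y rt| ≤ a + b * |rt| + M.γ * y) ∧
      (∀ y rt rt', 0 ≤ y → |M.W k y rt - M.W k y rt'| ≤ b * |rt - rt'|) ∧
      (∀ y y' rt, 0 ≤ y' → y' ≤ y → |M.W k y rt - M.W k y' rt| ≤ L * (y - y')) ∧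
      (∀ y y' rt, ((k : ℝ) + 1) * M.vbar ≤ y' → y' ≤ y →
        M.W k y rt = M.W k y' rt - M.γ * (y - y')) := by
  haveI := M.prob
  induction k with
  | zero =>
      have hG : ∀ y rt, M.W 0 y rt = sSup ((fun p : ℝ × (Fin K → ℝ) =>
          M.stage (T - 1) rt p.1 p.2 + (fun z => -(M.γ * z)) (y - p.1)) '' M.feas y) := by
        intro y rt
        simp only [EVModel.W, sub_eq_add_neg]
      obtain ⟨B1, B2, B3, B4⟩ := M.G_master hγ (T - 1) (fun z => -(M.γ * z)) 0 M.γ 0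
        le_rfl hγ le_rfl
        (fun z hz => by
          rw [abs_neg, abs_of_nonneg (mul_nonneg hγ hz)]; linarith)
        (fun z z' hz' hle => by
          rw [show -(M.γ * z) - -(M.γ * z') = -(M.γ * (z - z')) by ring, abs_neg,
            abs_of_nonneg (mul_nonneg hγ (by linarith))])
        (fun z z' hz' hle => by ring)
        (M.W 0) hG
      refine ⟨M.SU + M.Lp (T - 1) * (M.vbar + M.DD) + 0, M.Lp (T - 1),
        M.Lp (T - 1) + M.γ, ?_, M.Lp_nonneg _, ?_, B1, B2, B3, ?_⟩
      · have := M.SU_nonneg; have := M.Lp_nonneg (T - 1); have := M.DD_nonneg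
        have := M.vbar_pos
        nlinarith
      · linarith [M.Lp_nonneg (T - 1)]
      · intro y y' rt h1 h2
        refine B4 y y' rt ?_ h2
        simpa using h1
  | succ k ih =>
      obtain ⟨a, b, L, ha, hb, hL, H1, H2, H3, H4⟩ := ih
      set j := T - 1 - k with hj
      -- integrability of ω ↦ W k z (r j ω)
      have hcont : ∀ z : ℝ, 0 ≤ z → Continuous (fun rt => M.W k z rt) := by
        intro z hz
        have : LipschitzWith b.toNNReal (fun rt => M.W k z rt) := by
          apply LipschitzWith.of_dist_le_mul
          intro x y
          rw [Real.dist_eq, Real.dist_eq, Real.coe_toNNReal b hb]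
          exact H2 z x y hz
        exact this.continuous
      have hint : ∀ z : ℝ, 0 ≤ z → Integrable (fun ω => M.W k z (M.r j ω)) M.μ := by
        intro z hz
        have hbnd : Integrable (fun ω => b * |M.r j ω| + (a + M.γ * z)) M.μ :=
          ((M.r_int j).abs.const_mul b).add (integrable_const _)
        refine Integrable.mono' hbnd
          (((hcont z hz).measurable.comp (M.r_meas j)).aestronglyMeasurable) ?_
        refine Filter.Eventually.of_forall fun ω => ?_
        rw [Real.norm_eq_abs]
        have := H1 z (M.r j ω) hz
        linarith
      set R : ℝ := ∫ ω, |M.r j ω| ∂M.μ with hR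
      have hR0 : 0 ≤ R := integral_nonneg fun ω => abs_nonneg _
      set F : ℝ → ℝ := fun z => ∫ ω, M.W k z (M.r j ω) ∂M.μ with hF
      have hFb : ∀ z, 0 ≤ z → |F z| ≤ (a + b * R) + M.γ * z := by
        intro z hz
        have h1 : |F z| ≤ ∫ ω, |M.W k z (M.r j ω)| ∂M.μ := by
          simpa [Real.norm_eq_abs] using
            norm_integral_le_integral_norm (μ := M.μ) (f := fun ω => M.W k z (M.r j ω))
        have h2 : ∫ ω, |M.W k z (M.r j ω)| ∂M.μ ≤
            ∫ ω, (b * |M.r j ω| + (a + M.γ * z)) ∂M.μ := by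
          refine integral_mono (hint z hz).abs
            (((M.r_int j).abs.const_mul b).add (integrable_const _)) ?_
          intro ω
          have := H1 z (M.r j ω) hz
          simp only
          linarith
        have h3 : ∫ ω, (b * |M.r j ω| + (a + M.γ * z)) ∂M.μ = b * R + (a + M.γ * z) := by
          rw [integral_add ((M.r_int j).abs.const_mul b) (integrable_const _),
            integral_const_mul, integral_const]
          simp [measure_univ, hR]
        linarith
      have hFlip : ∀ z z', 0 ≤ z' → z' ≤ z → |F z - F z'| ≤ L * (z - z') := by
        intro z z' hz' hle
        have hz : 0 ≤ z := hz'.trans hle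
        rw [hF]
        rw [← integral_sub (hint z hz) (hint z' hz')]
        have h1 : |∫ ω, (M.W k z (M.r j ω) - M.W k z' (M.r j ω)) ∂M.μ| ≤
            ∫ ω, |M.W k z (M.r j ω) - M.W k z' (M.r j ω)| ∂M.μ := by
          simpa [Real.norm_eq_abs] using norm_integral_le_integral_norm (μ := M.μ)
            (f := fun ω => M.W k z (M.r j ω) - M.W k z' (M.r j ω))
        have h2 : ∫ ω, |M.W k z (M.r j ω) - M.W k z' (M.r j ω)| ∂M.μ ≤
            ∫ _ω, L * (z - z') ∂M.μ := by
          refine integral_mono ((hint z hz).sub (hint z' hz')).abs (integrable_const _) ?_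
          intro ω
          exact H3 z z' (M.r j ω) hz' hle
        rw [integral_const] at h2
        simp only [measure_univ, ENNReal.toReal_one, one_smul, smul_eq_mul, probReal_univ, one_mul] at h2
        linarith
      have hFlin : ∀ z z', ((k : ℝ) + 1) * M.vbar ≤ z' → z' ≤ z →
          F z = F z' - M.γ * (z - z') := by
        intro z z' hz' hle
        have h0 : 0 ≤ z' :=
          le_trans (mul_nonneg (by positivity) M.vbar_pos.le) hz'
        rw [hF]
        have : (fun ω => M.W k z (M.r j ω)) =
            fun ω => M.W k z' (M.r j ω) - M.γ * (z - z') := by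
          funext ω
          exact H4 z z' (M.r j ω) hz' hle
        simp only
        rw [this, integral_sub (hint z' h0) (integrable_const _), integral_const]
        simp [measure_univ]
      have hG : ∀ y rt, M.W (k + 1) y rt = sSup ((fun p : ℝ × (Fin K → ℝ) =>
          M.stage (T - 2 - k) rt p.1 p.2 + F (y - p.1)) '' M.feas y) := by
        intro y rt
        simp only [EVModel.W, hF, hj]
      obtain ⟨B1, B2, B3, B4⟩ := M.G_master hγ (T - 2 - k) F (a + b * R) L
        (((k : ℝ) + 1) * M.vbar)
        (by nlinarith) hL (mul_nonneg (by positivity) M.vbar_pos.le) hFb hFlip hFlin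
        (M.W (k + 1)) hG
      refine ⟨M.SU + M.Lp (T - 2 - k) * (M.vbar + M.DD) + (a + b * R), M.Lp (T - 2 - k),
        M.Lp (T - 2 - k) + L, ?_, M.Lp_nonneg _, ?_, B1, B2, B3, ?_⟩
      · have := M.SU_nonneg; have := M.Lp_nonneg (T - 2 - k); have := M.DD_nonneg
        have := M.vbar_pos
        nlinarith
      · linarith [M.Lp_nonneg (T - 2 - k)]
      · intro y y' rt h1 h2
        refine B4 y y' rt ?_ h2
        have : ((k : ℝ) + 1) * M.vbar + M.vbar = ((k : ℝ) + 1 + 1) * M.vbar := by ring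
        rw [this]
        refine le_trans (le_of_eq ?_) h1
        push_cast
        ring
  
end EVModel
/-- **Existence of charging thresholds.**
For every `t < T - 1` there exist thresholds `τ_t, δ_t ∈ [0, (T - t - 1) v̄]` with
`δ_t ≤ τ_t`, `-π_t⁺ ∈ h_{t+1}(τ_t)` and `-π_t⁻ ∈ h_{t+1}(δ_t)`, where `h_{t+1}` is the
superdifferential of the concave expected value function `V̄_{t+1}`. -/
theorem exists_charging_thresholds (K T : ℕ) (Ω : Type) [MeasurableSpace Ω]
    (M : EVModel K T Ω) (t : ℕ) (ht : t < T - 1) :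
    ∃ τ ∈ Set.Icc 0 (((T - t - 1 : ℕ) : ℝ) * M.vbar),
      ∃ δ ∈ Set.Icc 0 (((T - t - 1 : ℕ) : ℝ) * M.vbar),
        δ ≤ τ ∧ -M.pip t ∈ M.h (t + 1) τ ∧ -M.pim t ∈ M.h (t + 1) δ := by
  haveI := M.prob
  have hT : t < T := by omega
  obtain ⟨hpm_pos, hpm_le, hpp_lt⟩ := M.A1 t hT
  have hγpos : (0:ℝ) < M.γ := lt_trans (lt_of_lt_of_le hpm_pos hpm_le) hpp_lt
  obtain ⟨a, b, L, ha, hb, hL, H1, H2, H3, H4⟩ := M.W_master hγpos.le (T - 1 - (t + 1))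
  set k := T - 1 - (t + 1) with hk
  set j := t + 1 with hjdef
  -- integrability
  have hcont : ∀ z : ℝ, 0 ≤ z → Continuous (fun rt => M.W k z rt) := by
    intro z hz
    have : LipschitzWith b.toNNReal (fun rt => M.W k z rt) := by
      apply LipschitzWith.of_dist_le_mul
      intro x y
      rw [Real.dist_eq, Real.dist_eq, Real.coe_toNNReal b hb]
      exact H2 z x y hz
    exact this.continuous
  have hint : ∀ z : ℝ, 0 ≤ z → Integrable (fun ω => M.W k z (M.r j ω)) M.μ := by
    intro z hz
    have hbnd : Integrable (fun ω => b * |M.r j ω| + (a + M.γ * z)) M.μ :=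
      ((M.r_int j).abs.const_mul b).add (integrable_const _)
    refine Integrable.mono' hbnd
      (((hcont z hz).measurable.comp (M.r_meas j)).aestronglyMeasurable) ?_
    refine Filter.Eventually.of_forall fun ω => ?_
    rw [Real.norm_eq_abs]
    have := H1 z (M.r j ω) hz
    linarith
  set f : ℝ → ℝ := M.Vbar (t + 1) with hfdef
  have hfeq : ∀ y, f y = ∫ ω, M.W k y (M.r j ω) ∂M.μ := fun y => rfl
  set B : ℝ := ((T - t - 1 : ℕ) : ℝ) * M.vbar with hB
  have hkB : ((k : ℝ) + 1) * M.vbar = B := by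
    rw [hB]
    have hnat : k + 1 = T - t - 1 := by omega
    rw [← hnat]
    push_cast
    ring
  have hB0 : 0 ≤ B := by
    rw [hB]; exact mul_nonneg (Nat.cast_nonneg _) M.vbar_pos.le
  -- Lipschitz continuity of f
  have hflip : ∀ y y', 0 ≤ y' → y' ≤ y → |f y - f y'| ≤ L * (y - y') := by
    intro y y' hy' hle
    have hy : 0 ≤ y := hy'.trans hle
    rw [hfeq, hfeq, ← integral_sub (hint y hy) (hint y' hy')]
    have h1 : |∫ ω, (M.W k y (M.r j ω) - M.W k y' (M.r j ω)) ∂M.μ| ≤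
        ∫ ω, |M.W k y (M.r j ω) - M.W k y' (M.r j ω)| ∂M.μ := by
      simpa [Real.norm_eq_abs] using norm_integral_le_integral_norm (μ := M.μ)
        (f := fun ω => M.W k y (M.r j ω) - M.W k y' (M.r j ω))
    have h2 : ∫ ω, |M.W k y (M.r j ω) - M.W k y' (M.r j ω)| ∂M.μ ≤
        ∫ _ω, L * (y - y') ∂M.μ := by
      refine integral_mono ((hint y hy).sub (hint y' hy')).abs (integrable_const _) ?_
      intro ω
      exact H3 y y' (M.r j ω) hy' hle
    rw [integral_const] at h2
    simp only [measure_univ, ENNReal.toReal_one, one_smul, smul_eq_mul, probReal_univ, one_mul] at h2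
    linarith
  have hcontf : ContinuousOn f (Set.Icc 0 B) := by
    refine LipschitzOnWith.continuousOn (K := L.toNNReal) ?_
    rw [lipschitzOnWith_iff_dist_le_mul]
    intro x hx y hy
    rw [Real.dist_eq, Real.dist_eq, Real.coe_toNNReal L hL]
    rcases le_total y x with h | h
    · rw [abs_of_nonneg (by linarith : (0:ℝ) ≤ x - y)]
      exact hflip x y hy.1 h
    · rw [abs_of_nonpos (by linarith : x - y ≤ 0)]
      have := hflip y x hx.1 h
      rw [abs_sub_comm] at this
      calc |f x - f y| ≤ L * (y - x) := this
        _ = L * -(x - y) := by ring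
  -- linear decay beyond B
  have hlin : ∀ y, B ≤ y → f y = f B - M.γ * (y - B) := by
    intro y hy
    rw [hfeq, hfeq]
    have he : (fun ω => M.W k y (M.r j ω)) =
        fun ω => M.W k B (M.r j ω) - M.γ * (y - B) := by
      funext ω
      exact H4 y B (M.r j ω) (le_of_eq hkB) hy
    rw [he, integral_sub (hint B hB0) (integrable_const _), integral_const]
    simp [measure_univ]
  -- existence of maximizers
  have key : ∀ π : ℝ, π ≤ M.γ → ∃ τ ∈ Set.Icc (0:ℝ) B,
      ∀ z, 0 ≤ z → f z + π * z ≤ f τ + π * τ := by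
    intro π hπ
    have hcφ : ContinuousOn (fun z => f z + π * z) (Set.Icc 0 B) :=
      hcontf.add ((continuous_const.mul continuous_id).continuousOn)
    obtain ⟨τ, hτ, hmax⟩ := isCompact_Icc.exists_isMaxOn (nonempty_Icc.mpr hB0) hcφ
    refine ⟨τ, hτ, fun z hz => ?_⟩
    rcases le_total z B with h | h
    · exact hmax ⟨hz, h⟩
    · have h1 := hlin z h
      have h2 : f B + π * B ≤ f τ + π * τ := hmax ⟨hB0, le_rfl⟩
      nlinarith
  obtain ⟨τ, hτ, hτmax⟩ := key (M.pip t) hpp_lt.le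
  obtain ⟨δ, hδ, hδmax⟩ := key (M.pim t) (hpm_le.trans hpp_lt.le)
  have mem_of_max : ∀ π (x : ℝ), (∀ z, 0 ≤ z → f z + π * z ≤ f x + π * x) →
      -π ∈ M.h (t + 1) x := by
    intro π x hx
    simp only [EVModel.h, superdiff, Set.mem_setOf_eq]
    intro z hz
    have := hx z hz
    nlinarith
  by_cases hpe : M.pip t = M.pim t
  · refine ⟨τ, hτ, τ, hτ, le_rfl, mem_of_max _ _ hτmax, ?_⟩
    rw [← hpe]
    exact mem_of_max _ _ hτmax
  · have hlt : M.pim t < M.pip t := lt_of_le_of_ne hpm_le (fun h => hpe h.symm)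
    have hdt : δ ≤ τ := by
      have h1 := hτmax δ hδ.1
      have h2 := hδmax τ hτ.1
      nlinarith
    exact ⟨τ, hτ, δ, hδ, hdt, mem_of_max _ _ hτmax, mem_of_max _ _ hδmax⟩
end
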